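/- Let p be a prime and n a positive integer with p > n^4 + 5 and n dividing p − 1. Let X_0 be the multiplicative subgroup of F_p^× of order (p−1)/n and X_i = g^i X_0 its cosets for a generator g of F_p^×. Then for all i, j, l in {0,...,n−1}, (X_i + X_j) ∩ X_l ≠ ∅. -/

import Mathlib

open Finset


-- inequality lemma
lemma ineq_aux (p n : ℕ) (hn : 0 < n) (hpn : n ^ 4 + 5 < p) :
    ((n : ℝ) ^ 2 - 1) * Real.sqrt p < (p : ℝ) - 2 := by
  have hp7 : (7 : ℝ) ≤ p := by
    have : n ^ 4 + 6 ≤ p := hpn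
    have : (n:ℝ) ^ 4 + 6 ≤ p := by exact_mod_cast this
    nlinarith [one_le_pow₀ (by exact_mod_cast hn : (1:ℝ) ≤ n) (n:=4)]
  set r := Real.sqrt p with hr
  have hr0 : 0 ≤ r := Real.sqrt_nonneg _
  have hr2 : r ^ 2 = p := Real.sq_sqrt (by positivity)
  have hrn : (n : ℝ) ^ 2 ≤ r := by
    rw [hr]
    rw [show ((n:ℝ)^2) = Real.sqrt ((n:ℝ)^4) by
      rw [show ((n:ℝ)^4) = ((n:ℝ)^2)^2 by ring, Real.sqrt_sq (by positivity)]]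
    exact Real.sqrt_le_sqrt (by
      have : (n:ℝ) ^ 4 + 6 ≤ p := by exact_mod_cast hpn
      linarith)
  have hrgt2 : 2 < r := by nlinarith
  have hn1 : (1 : ℝ) ≤ n := by exact_mod_cast hn
  nlinarith [mul_nonneg (sub_nonneg.2 hrn) hr0, sq_nonneg ((n:ℝ)^2 - 1)]

-- key counting lemma
lemma key_aux (p n : ℕ) [hp : Fact p.Prime] (hn : 0 < n) (hpn : n ^ 4 + 5 < p)
    (hdvd : n ∣ p - 1) (α β : ZMod p) (hα : α ≠ 0) (hβ : β ≠ 0) :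
    ∃ u v : ZMod p, u ≠ 0 ∧ v ≠ 0 ∧ α * u ^ n + β * v ^ n = 1 := by
  classical
  have hp1 : 1 < p := hp.out.one_lt
  have hcard : Fintype.card (ZMod p) = p := ZMod.card p
  have hcu : Fintype.card (ZMod p)ˣ = p - 1 := ZMod.card_units p
  obtain ⟨d, hd⟩ := hdvd
  have hd0 : 0 < d := by
    rcases Nat.eq_zero_or_pos d with h | h
    · subst h; omega
    · exact h
  -- γ : generator of units
  obtain ⟨γ, hγ⟩ := IsCyclic.exists_generator (α := (ZMod p)ˣ)
  have hγord : orderOf γ = p - 1 := by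
    rw [orderOf_eq_card_of_forall_mem_zpowers hγ, Nat.card_eq_fintype_card, hcu]
  -- the character group iso
  have hexp0 : Monoid.exponent (ZMod p)ˣ ≠ 0 := Monoid.exponent_ne_zero_of_finite
  haveI : NeZero ((Monoid.exponent (ZMod p)ˣ : ℂ)) :=
    ⟨by exact_mod_cast hexp0⟩
  obtain ⟨e⟩ := MulChar.mulEquiv_units (ZMod p) ℂ
  set X : MulChar (ZMod p) ℂ := e.symm γ with hXdef
  have hXord : orderOf X = p - 1 := by
    show orderOf (e.symm γ) = p - 1
    rw [← orderOf_injective e.symm.toMonoidHom e.symm.injective γ] at hγord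
    exact hγord
  -- evaluation at γ is an injective monoid hom
  let ev : MulChar (ZMod p) ℂ →* ℂ :=
    { toFun := fun χ => χ ↑γ
      map_one' := MulChar.one_apply_coe γ
      map_mul' := fun χ χ' => MulChar.mul_apply χ χ' γ }
  have hev : Function.Injective ev := by
    intro χ₁ χ₂ h
    apply MulChar.ext
    intro a
    obtain ⟨m, hm⟩ := mem_powers_iff_mem_zpowers.2 (hγ a)
    rw [← hm, Units.val_pow_eq_pow_val, map_pow, map_pow]
    have h' : χ₁ ↑γ = χ₂ ↑γ := h
    rw [h']
  have hXγ : orderOf (X (↑γ : ZMod p)) = p - 1 := by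
    have h1 : orderOf (ev X) = orderOf X := orderOf_injective ev hev X
    have h2 : ev X = X ↑γ := rfl
    rw [← h2, h1, hXord]
  -- every nonzero element is a power of ↑γ
  have hgen : ∀ s : ZMod p, s ≠ 0 → ∃ m : ℕ, ((↑γ : ZMod p)) ^ m = s := by
    intro s hs
    obtain ⟨su, hsu⟩ := (isUnit_iff_ne_zero.2 hs)
    obtain ⟨m, hm⟩ := mem_powers_iff_mem_zpowers.2 (hγ su)
    exact ⟨m, by rw [← hsu, ← hm, Units.val_pow_eq_pow_val]⟩
  set χk : ℕ → MulChar (ZMod p) ℂ := fun k => X ^ (d * k) with hχk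
  have hval : ∀ k, ∀ s : ZMod p, s ≠ 0 → χk k s = X s ^ (d * k) := by
    intro k s hs
    rcases Nat.eq_zero_or_pos k with rfl | hk
    · show (X ^ (d * 0)) s = X s ^ (d * 0)
      rw [mul_zero, pow_zero, pow_zero, MulChar.one_apply (isUnit_iff_ne_zero.2 hs)]
    · exact MulChar.pow_apply' X (by positivity) s
  have hnorm : ∀ (χ : MulChar (ZMod p) ℂ) (s : ZMod p), s ≠ 0 → ‖χ s‖ = 1 := by
    intro χ s hs
    have h1 : χ s ^ (p - 1) = 1 := by
      rw [← map_pow, ZMod.pow_card_sub_one_eq_one hs, MulChar.map_one]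
    exact Complex.norm_eq_one_of_pow_eq_one h1 (by omega)
  have hA1 : ∀ s : ZMod p, (∃ u : ZMod p, u ≠ 0 ∧ u ^ n = s) →
      ∑ k ∈ range n, χk k s = (n : ℂ) := by
    rintro s ⟨u, hu0, hun⟩
    have hs : s ≠ 0 := by rw [← hun]; exact pow_ne_zero _ hu0
    have hXs : X s ^ d = 1 := by
      rw [← hun, ← map_pow, ← pow_mul, ← hd,
        ZMod.pow_card_sub_one_eq_one hu0, MulChar.map_one]
    calc ∑ k ∈ range n, χk k s = ∑ k ∈ range n, (X s ^ d) ^ k := by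
          refine sum_congr rfl fun k _ => ?_
          rw [hval k s hs, pow_mul]
      _ = ∑ _k ∈ range n, (1 : ℂ) := by simp [hXs]
      _ = n := by simp
  have hA2 : ∀ s : ZMod p, ¬ (∃ u : ZMod p, u ≠ 0 ∧ u ^ n = s) →
      ∑ k ∈ range n, χk k s = 0 := by
    intro s hns
    by_cases hs : s = 0
    · subst hs
      refine sum_eq_zero fun k _ => ?_
      exact (χk k).map_nonunit (by simpa using not_isUnit_zero)
    · obtain ⟨m, hm⟩ := hgen s hs
      set ω : ℂ := X s ^ d with hωdef
      have hω1 : ω ≠ 1 := by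
        intro h
        have h2 : X (↑γ : ZMod p) ^ (m * d) = 1 := by
          rw [pow_mul, ← map_pow, hm, ← hωdef, h]
        have h3 : (p - 1) ∣ m * d := hXγ ▸ orderOf_dvd_of_pow_eq_one h2
        rw [hd] at h3
        have h4 : n ∣ m := by
          rw [mul_comm n d, mul_comm m d] at h3
          exact (Nat.mul_dvd_mul_iff_left hd0).1 h3
        obtain ⟨m', rfl⟩ := h4
        exact hns ⟨(↑γ : ZMod p) ^ m', pow_ne_zero m' (Units.ne_zero γ), by rw [← pow_mul, mul_comm m' n, hm]⟩
      have hωn : ω ^ n = 1 := by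
        rw [hωdef, ← pow_mul, ← map_pow, mul_comm d n, ← hd,
          ZMod.pow_card_sub_one_eq_one hs, MulChar.map_one]
      calc ∑ k ∈ range n, χk k s = ∑ k ∈ range n, ω ^ k := by
            refine sum_congr rfl fun k _ => ?_
            rw [hval k s hs, pow_mul, hωdef]
        _ = (ω ^ n - 1) / (ω - 1) := geom_sum_eq hω1 n
        _ = 0 := by rw [hωn]; simp
  -- the big character sum
  have hα' : (α⁻¹ : ZMod p) ≠ 0 := inv_ne_zero hα
  have hβ' : (β⁻¹ : ZMod p) ≠ 0 := inv_ne_zero hβ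
  set T : ℂ := ∑ x : ZMod p,
      (∑ k ∈ range n, χk k (x * α⁻¹)) * (∑ m ∈ range n, χk m ((1 - x) * β⁻¹)) with hT
  have hT3 : T = ∑ q ∈ range n ×ˢ range n,
      (χk q.1 α⁻¹ * χk q.2 β⁻¹) * jacobiSum (χk q.1) (χk q.2) := by
    rw [hT]
    simp_rw [Finset.sum_mul_sum]
    rw [Finset.sum_comm]
    rw [Finset.sum_product]
    refine sum_congr rfl fun k _ => ?_
    rw [Finset.sum_comm]
    refine sum_congr rfl fun m _ => ?_
    rw [jacobiSum, Finset.mul_sum]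
    refine sum_congr rfl fun x _ => ?_
    rw [map_mul, map_mul]
    ring
  have hone : ∀ s : ZMod p, s ≠ 0 → χk 0 s = 1 := fun s hs => by
    show (X ^ (d * 0)) s = 1
    rw [mul_zero, pow_zero, MulChar.one_apply (isUnit_iff_ne_zero.2 hs)]
  have hχk0 : χk 0 = 1 := by show X ^ (d * 0) = 1; rw [mul_zero, pow_zero]
  have hχk1 : ∀ k, 0 < k → k < n → χk k ≠ 1 := by
    intro k hk0 hkn h1
    have h2 : orderOf X ∣ d * k := orderOf_dvd_of_pow_eq_one h1
    rw [hXord, hd] at h2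
    rw [mul_comm n d] at h2
    have hlt : d * k < d * n := mul_lt_mul_of_pos_left hkn hd0
    have hpos : 0 < d * k := Nat.mul_pos hd0 hk0
    exact absurd (Nat.le_of_dvd hpos h2) (Nat.not_le.2 hlt)
  have hsqrt1 : (1 : ℝ) ≤ Real.sqrt p := by
    rw [show (1 : ℝ) = Real.sqrt 1 by simp]
    exact Real.sqrt_le_sqrt (by exact_mod_cast hp1.le)
  have hJ : ∀ k, k < n → ∀ m, m < n → (k, m) ≠ ((0 : ℕ), (0 : ℕ)) →
      ‖jacobiSum (χk k) (χk m)‖ ≤ Real.sqrt p := by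
    intro k hk m hm hkm
    rcases Nat.eq_zero_or_pos k with rfl | hk0
    · rcases Nat.eq_zero_or_pos m with rfl | hm0
      · simp at hkm
      · rw [hχk0, jacobiSum_one_nontrivial (hχk1 m hm0 hm), norm_neg, norm_one]
        exact hsqrt1
    · rcases Nat.eq_zero_or_pos m with rfl | hm0
      · rw [jacobiSum_comm, hχk0, jacobiSum_one_nontrivial (hχk1 k hk0 hk), norm_neg, norm_one]
        exact hsqrt1
      · by_cases hmul : χk k * χk m = 1
        · have hinv : χk m = (χk k)⁻¹ := (inv_eq_of_mul_eq_one_right hmul).symm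

          have hne1 : (-1 : ZMod p) ≠ 0 := by
            simp only [ne_eq, neg_eq_zero]
            exact one_ne_zero
          rw [hinv, jacobiSum_nontrivial_inv (hχk1 k hk0 hk), norm_neg,
            hnorm _ _ hne1]
          exact hsqrt1
        · have hchar : ringChar ℂ ≠ ringChar (ZMod p) := by
            rw [ZMod.ringChar_zmod_n]
            have : ringChar ℂ = 0 := ringChar.eq_zero
            omega
          have hmain := jacobiSum_mul_jacobiSum_inv hchar (hχk1 k hk0 hk)
            (hχk1 m hm0 hm) hmul
          have hcc : ∀ (χ : MulChar (ZMod p) ℂ) (s : ZMod p),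
              χ⁻¹ s = starRingEnd ℂ (χ s) := by
            intro χ s
            by_cases hs : s = 0
            · subst hs
              rw [χ⁻¹.map_nonunit (by simpa using not_isUnit_zero),
                χ.map_nonunit (by simpa using not_isUnit_zero), map_zero]
            · rw [starRingEnd_apply]
              exact (MulChar.star_apply' χ s).symm
          have hconj : jacobiSum (χk k)⁻¹ (χk m)⁻¹
              = starRingEnd ℂ (jacobiSum (χk k) (χk m)) := by
            rw [jacobiSum, jacobiSum, map_sum]
            refine sum_congr rfl fun x _ => ?_
            rw [map_mul, hcc, hcc]
          rw [hconj, Complex.mul_conj] at hmain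
          have hns : Complex.normSq (jacobiSum (χk k) (χk m)) = (p : ℝ) := by
            have : ((Complex.normSq (jacobiSum (χk k) (χk m)) : ℝ) : ℂ)
                = ((p : ℝ) : ℂ) := by
              rw [hmain, hcard]; push_cast; ring
            exact_mod_cast this
          rw [Complex.norm_def, hns]
  -- T is nonzero
  have hf00 : (χk (0:ℕ) α⁻¹ * χk (0:ℕ) β⁻¹) * jacobiSum (χk 0) (χk 0) = (p : ℂ) - 2 := by
    rw [hone _ hα', hone _ hβ', hχk0, jacobiSum_one_one, hcard]
    push_cast
    ring
  have h00mem : ((0, 0) : ℕ × ℕ) ∈ range n ×ˢ range n := by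
    simp [Finset.mem_product, hn]
  have hTne : T ≠ 0 := by
    intro h0
    rw [hT3, ← Finset.add_sum_erase _ _ h00mem] at h0
    have hrest : ‖∑ q ∈ (range n ×ˢ range n).erase (0, 0),
        (χk q.1 α⁻¹ * χk q.2 β⁻¹) * jacobiSum (χk q.1) (χk q.2)‖
        ≤ ((n : ℝ) ^ 2 - 1) * Real.sqrt p := by
      calc ‖∑ q ∈ (range n ×ˢ range n).erase (0, 0),
          (χk q.1 α⁻¹ * χk q.2 β⁻¹) * jacobiSum (χk q.1) (χk q.2)‖
          ≤ ∑ q ∈ (range n ×ˢ range n).erase (0, 0),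
            ‖(χk q.1 α⁻¹ * χk q.2 β⁻¹) * jacobiSum (χk q.1) (χk q.2)‖ :=
            norm_sum_le _ _
        _ ≤ ∑ _q ∈ (range n ×ˢ range n).erase (0, 0), Real.sqrt p := by
            refine sum_le_sum fun q hq => ?_
            obtain ⟨hq1, hq2⟩ := Finset.mem_erase.1 hq
            obtain ⟨hqa, hqb⟩ := Finset.mem_product.1 hq2
            rw [Finset.mem_range] at hqa hqb
            rw [norm_mul, norm_mul, hnorm _ _ hα', hnorm _ _ hβ', one_mul, one_mul]
            exact hJ q.1 hqa q.2 hqb (by simpa [Prod.ext_iff] using hq1)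
        _ = ((n : ℝ) ^ 2 - 1) * Real.sqrt p := by
            rw [Finset.sum_const, Finset.card_erase_of_mem h00mem,
              Finset.card_product, Finset.card_range, nsmul_eq_mul]
            have hn2 : (1 : ℕ) ≤ n * n := Nat.one_le_iff_ne_zero.2 (by positivity)
            rw [Nat.cast_sub hn2]
            push_cast
            ring
    have hptwo : ‖(p : ℂ) - 2‖ = (p : ℝ) - 2 := by
      have h1 : ((p : ℂ) - 2) = (((p : ℝ) - 2 : ℝ) : ℂ) := by push_cast; ring
      have hp7 : 7 ≤ p := by
        have := Nat.one_le_pow 4 n hn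
        omega
      rw [h1, Complex.norm_real, Real.norm_of_nonneg (by
        have : (7 : ℝ) ≤ p := by exact_mod_cast hp7
        linarith)]
    have hineq := ineq_aux p n hn hpn
    have heq : ((p : ℂ) - 2) = - ∑ q ∈ (range n ×ˢ range n).erase (0, 0),
        (χk q.1 α⁻¹ * χk q.2 β⁻¹) * jacobiSum (χk q.1) (χk q.2) := by
      rw [← hf00]
      linear_combination h0
    rw [heq, norm_neg] at hptwo
    linarith [hrest, hineq]
  -- extract a good x
  have hex : ∃ x : ZMod p, (∑ k ∈ range n, χk k (x * α⁻¹)) ≠ 0 ∧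
      (∑ m ∈ range n, χk m ((1 - x) * β⁻¹)) ≠ 0 := by
    by_contra hc
    push_neg at hc
    apply hTne
    rw [hT]
    refine Finset.sum_eq_zero fun x _ => ?_
    by_cases h1 : (∑ k ∈ range n, χk k (x * α⁻¹)) = 0
    · rw [h1, zero_mul]
    · rw [hc x h1, mul_zero]
  obtain ⟨x, hx1, hx2⟩ := hex
  have hu : ∃ u : ZMod p, u ≠ 0 ∧ u ^ n = x * α⁻¹ := by
    by_contra hcu
    exact hx1 (hA2 _ hcu)
  have hv : ∃ v : ZMod p, v ≠ 0 ∧ v ^ n = (1 - x) * β⁻¹ := by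
    by_contra hcv
    exact hx2 (hA2 _ hcv)
  obtain ⟨u, hu0, hun⟩ := hu
  obtain ⟨v, hv0, hvn⟩ := hv
  refine ⟨u, v, hu0, hv0, ?_⟩
  rw [hun, hvn]
  field_simp
  ring

open Pointwise

theorem stmt_7 (p n : ℕ) (hp : p.Prime) (hn : 0 < n) (hpn : p > n ^ 4 + 5)
    (hdvd : n ∣ p - 1)
    (g : ZMod p) (hg : orderOf g = p - 1)
    (X : ℕ → Set (ZMod p))
    (hX : ∀ m, X m = {x : ZMod p | ∃ a : ℕ, x = g ^ (a * n + m)}) :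
    ∀ i < n, ∀ j < n, ∀ l < n, ((X i + X j) ∩ X l).Nonempty := by
  haveI : Fact p.Prime := ⟨hp⟩
  intro i hi j hj l hl
  have hp1 : 1 < p := hp.one_lt
  have hgp : g ^ (p - 1) = 1 := by rw [← hg]; exact pow_orderOf_eq_one g
  have hg0 : g ≠ 0 := by
    intro h
    rw [h, zero_pow (by omega : p - 1 ≠ 0)] at hgp
    exact zero_ne_one hgp
  obtain ⟨gu, hgu⟩ := isUnit_iff_ne_zero.2 hg0
  have hguord : orderOf gu = p - 1 := by
    rw [← orderOf_units, hgu, hg]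
  have hcu : Fintype.card (ZMod p)ˣ = p - 1 := ZMod.card_units p
  have htop : Subgroup.zpowers gu = ⊤ := by
    apply Subgroup.eq_top_of_card_eq
    rw [Nat.card_zpowers, hguord, Nat.card_eq_fintype_card, hcu]
  have hgen : ∀ u : (ZMod p)ˣ, ∃ a : ℕ, gu ^ a = u := by
    intro u
    exact mem_powers_iff_mem_zpowers.2 (htop ▸ Subgroup.mem_top u)
  -- apply the key lemma
  have hgl : (g : ZMod p) ^ l ≠ 0 := pow_ne_zero _ hg0
  have hα : g ^ i * (g ^ l)⁻¹ ≠ 0 :=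
    mul_ne_zero (pow_ne_zero _ hg0) (inv_ne_zero hgl)
  have hβ : g ^ j * (g ^ l)⁻¹ ≠ 0 :=
    mul_ne_zero (pow_ne_zero _ hg0) (inv_ne_zero hgl)
  obtain ⟨u, v, hu0, hv0, heq⟩ := key_aux p n hn hpn hdvd _ _ hα hβ
  have heq2 : g ^ i * u ^ n + g ^ j * v ^ n = g ^ l := by
    have h1 : (g ^ i * (g ^ l)⁻¹ * u ^ n + g ^ j * (g ^ l)⁻¹ * v ^ n) * g ^ l
        = g ^ i * u ^ n + g ^ j * v ^ n := by
      field_simp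
    rw [← h1, heq, one_mul]
  -- write u and v as powers of g
  obtain ⟨uu, huu⟩ := isUnit_iff_ne_zero.2 hu0
  obtain ⟨vv, hvv⟩ := isUnit_iff_ne_zero.2 hv0
  obtain ⟨a, ha⟩ := hgen uu
  obtain ⟨b, hb⟩ := hgen vv
  have hua : u = g ^ a := by
    rw [← huu, ← ha, ← hgu, Units.val_pow_eq_pow_val]
  have hvb : v = g ^ b := by
    rw [← hvv, ← hb, ← hgu, Units.val_pow_eq_pow_val]
  refine ⟨g ^ l, ?_, ?_⟩
  · rw [Set.mem_add]
    refine ⟨g ^ (a * n + i), ?_, g ^ (b * n + j), ?_, ?_⟩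
    · rw [hX i]; exact ⟨a, rfl⟩
    · rw [hX j]; exact ⟨b, rfl⟩
    · rw [← heq2, hua, hvb]
      rw [pow_add, pow_add, ← pow_mul, ← pow_mul]
      ring
  · rw [hX l]
    exact ⟨0, by simp⟩
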